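/- An N-tuple of n×n complex matrices T = (T₁,...,T_N) satisfies T^w = 0 for all words w of length ≥ m+1 if and only if T is unitarily similar to an N-tuple of matrices each of which is strictly lower block-triangular with respect to a common decomposition ℂ^n = ℂ^{n₁} ⊕ ⋯ ⊕ ℂ^{n_{m+1}} (blocks not necessarily square, some n_j possibly zero): i.e., there exists a unitary n×n matrix V such that V T_k V* maps the j-th block into the sum of blocks j+1,...,m+1 for each j ≤ m and annihilates the last block. -/

import Mathlib

open Matrix Module

private lemma lift_conj15 {N n : ℕ} (T : Fin N → Matrix (Fin n) (Fin n) ℂ)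
    (V : Matrix (Fin n) (Fin n) ℂ) (h1 : V * star V = 1)
    (w : FreeMonoid (Fin N)) :
    FreeMonoid.lift (fun k => V * T k * star V) w = V * FreeMonoid.lift T w * star V := by
  induction w using FreeMonoid.recOn with
  | one => simp [h1]
  | of_mul a x ih =>
    rw [_root_.map_mul, _root_.map_mul, ih, FreeMonoid.lift_eval_of, FreeMonoid.lift_eval_of]
    have h2 : star V * V = 1 := by rw [mul_eq_one_comm] at h1; exact h1
    rw [show V * T a * star V * (V * FreeMonoid.lift T x * star V)
        = V * T a * (star V * V) * FreeMonoid.lift T x * star V by noncomm_ring]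
    rw [h2, mul_one]; noncomm_ring

private lemma entries_zero15 {N n m : ℕ} (S : Fin N → Matrix (Fin n) (Fin n) ℂ)
    (f : Fin n → Fin (m + 1))
    (h : ∀ (k : Fin N) (i j : Fin n), f i ≤ f j → S k i j = 0)
    (w : FreeMonoid (Fin N)) (i j : Fin n)
    (hlen : (f i : ℕ) < (f j : ℕ) + w.length) :
    FreeMonoid.lift S w i j = 0 := by
  induction w using FreeMonoid.recOn generalizing i with
  | one =>
    simp only [FreeMonoid.length_one, Nat.add_zero] at hlen
    rw [_root_.map_one]
    exact Matrix.one_apply_ne (fun hij => by subst hij; omega)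
  | of_mul a x ih =>
    rw [_root_.map_mul, FreeMonoid.lift_eval_of, Matrix.mul_apply]
    apply Finset.sum_eq_zero
    intro p _
    rcases le_or_gt (f i) (f p) with hle | hlt
    · rw [h a i p hle, zero_mul]
    · rw [FreeMonoid.length_mul, FreeMonoid.length_of] at hlen
      rw [ih p (by omega), mul_zero]

noncomputable def chainW15 {N n : ℕ} (T : Fin N → Matrix (Fin n) (Fin n) ℂ) :
    ℕ → Submodule ℂ (EuclideanSpace ℂ (Fin n))
  | 0 => ⊤
  | j + 1 => ⨆ k : Fin N, (chainW15 T j).map (Matrix.toEuclideanLin (T k))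

private lemma chainW15_antitone {N n : ℕ} (T : Fin N → Matrix (Fin n) (Fin n) ℂ) :
    Antitone (chainW15 T) := by
  apply antitone_nat_of_succ_le
  intro j
  induction j with
  | zero => exact le_top
  | succ j ih =>
    rw [chainW15, chainW15]
    exact iSup_mono fun k => Submodule.map_mono ih

private lemma chainW15_map_le {N n : ℕ} (T : Fin N → Matrix (Fin n) (Fin n) ℂ)
    (k : Fin N) (j : ℕ) :
    (chainW15 T j).map (Matrix.toEuclideanLin (T k)) ≤ chainW15 T (j + 1) := by
  rw [chainW15]
  exact le_iSup (fun k => (chainW15 T j).map (Matrix.toEuclideanLin (T k))) k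

private lemma chainW15_le_range {N n : ℕ} (T : Fin N → Matrix (Fin n) (Fin n) ℂ) (j : ℕ) :
    chainW15 T j ≤ ⨆ (w : FreeMonoid (Fin N)) (_ : w.length = j),
      LinearMap.range (Matrix.toEuclideanLin (FreeMonoid.lift T w)) := by
  induction j with
  | zero =>
    refine le_trans ?_ (le_iSup₂_of_le 1 FreeMonoid.length_one le_rfl)
    rw [_root_.map_one]
    rw [Matrix.toEuclideanLin_eq_toLin, Matrix.toLin_one, LinearMap.range_id]
    exact le_rfl
  | succ j ih =>
    rw [chainW15]
    refine iSup_le fun k => ?_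
    refine le_trans (Submodule.map_mono ih) ?_
    rw [Submodule.map_iSup]
    refine iSup_le fun w => ?_
    rw [Submodule.map_iSup]
    refine iSup_le fun hw => ?_
    rw [← LinearMap.range_comp]
    have hcomp : Matrix.toEuclideanLin (T k) ∘ₗ Matrix.toEuclideanLin (FreeMonoid.lift T w)
        = Matrix.toEuclideanLin (FreeMonoid.lift T (FreeMonoid.of k * w)) := by
      rw [_root_.map_mul, FreeMonoid.lift_eval_of, Matrix.toEuclideanLin_eq_toLin,
        Matrix.toLin_mul _ (PiLp.basisFun 2 ℂ (Fin n)) _]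
    rw [hcomp]
    exact le_iSup₂_of_le (FreeMonoid.of k * w)
      (by rw [FreeMonoid.length_mul, FreeMonoid.length_of, hw]; omega) le_rfl

private lemma exists_subordinate15 {F : Type} [NormedAddCommGroup F]
    [InnerProductSpace ℂ F] [FiniteDimensional ℂ F]
    {n m : ℕ} (hn : finrank ℂ F = n) (W : ℕ → Submodule ℂ F) (hanti : Antitone W)
    (htop : W 0 = ⊤) (hbot : W (m + 1) = ⊥) :
    ∃ (b : OrthonormalBasis (Fin n) ℂ F) (f : Fin n → Fin (m + 1)), Monotone f ∧
      ∀ i, b i ∈ W (f i) ⊓ (W ((f i : ℕ) + 1))ᗮ := by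
  classical
  set V : Fin (m + 1) → Submodule ℂ F :=
    fun j => W (j : ℕ) ⊓ (W ((j : ℕ) + 1))ᗮ with hVdef
  have hOrth : OrthogonalFamily ℂ (fun j => V j) (fun j => (V j).subtypeₗᵢ) := by
    intro i j hij x y
    simp only [Submodule.coe_subtypeₗᵢ, Submodule.coe_subtype]
    rcases lt_or_gt_of_ne hij with hlt | hgt
    · have hy : (y : F) ∈ W ((i : ℕ) + 1) := hanti (by exact_mod_cast hlt) y.2.1
      exact (Submodule.mem_orthogonal' _ _).mp x.2.2 _ hy
    · have hx : (x : F) ∈ W ((j : ℕ) + 1) := hanti (by exact_mod_cast hgt) x.2.1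
      exact (Submodule.mem_orthogonal _ _).mp y.2.2 _ hx
  have hsup : ⨆ j : Fin (m + 1), V j = ⊤ := by
    have key : ∀ t : ℕ, t ≤ m + 1 → W (m + 1 - t) ≤ ⨆ j : Fin (m + 1), V j := by
      intro t
      induction t with
      | zero => intro _; simp [hbot]
      | succ t ih =>
        intro ht
        set j := m + 1 - (t + 1) with hjdef
        have hj : m + 1 - t = j + 1 := by omega
        have hle : W (j + 1) ≤ W j := hanti (Nat.le_succ j)
        have hsplit := Submodule.sup_orthogonal_inf_of_hasOrthogonalProjection hle
        have ih' := ih (by omega)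
        rw [hj] at ih'
        rw [← hsplit]
        refine sup_le ih' ?_
        have heq : (W (j + 1))ᗮ ⊓ W j = V ⟨j, by omega⟩ := by
          rw [inf_comm]
        rw [heq]
        exact le_iSup (fun i : Fin (m + 1) => V i) ⟨j, by omega⟩
    have h2 := key (m + 1) le_rfl
    rw [Nat.sub_self, htop] at h2
    exact eq_top_iff.mpr h2
  have hInt : DirectSum.IsInternal V :=
    DirectSum.isInternal_submodule_of_iSupIndep_of_iSup_eq_top hOrth.independent hsup
  set b0 := hInt.subordinateOrthonormalBasis hn hOrth with hb0
  set g : Fin n → Fin (m + 1) :=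
    fun a => hInt.subordinateOrthonormalBasisIndex hn a hOrth with hg
  have hg0 : ∀ a, b0 a ∈ V (g a) := fun a =>
    hInt.subordinateOrthonormalBasis_subordinate hn a hOrth
  set σ := Tuple.sort g with hσ
  refine ⟨b0.reindex σ.symm, g ∘ σ, Tuple.monotone_sort g, fun i => ?_⟩
  rw [OrthonormalBasis.coe_reindex]
  simpa [hVdef] using hg0 (σ i)

/-- An `N`-tuple of `n×n` complex matrices satisfies `T^w = 0` for all words
of length `≥ m+1` if and only if it is unitarily similar to an `N`-tuple of
matrices that are strictly lower block-triangular with respect to a common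
decomposition `ℂ^n = ℂ^{n_1} ⊕ ⋯ ⊕ ℂ^{n_{m+1}}` (blocks not necessarily
square, some possibly of size zero).  The block structure is encoded by a
monotone assignment `f : Fin n → Fin (m+1)` of coordinates to blocks; strict
lower block-triangularity of `T̃_k = V T_k V*` means `(T̃_k) i j = 0` whenever
`f i ≤ f j`. -/
theorem stmt15 {N n m : ℕ} (T : Fin N → Matrix (Fin n) (Fin n) ℂ) :
    (∀ w : FreeMonoid (Fin N), m + 1 ≤ w.length → FreeMonoid.lift T w = 0) ↔
    ∃ V ∈ Matrix.unitaryGroup (Fin n) ℂ, ∃ f : Fin n → Fin (m + 1),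
      Monotone f ∧
      ∀ (k : Fin N) (i j : Fin n), f i ≤ f j →
        (V * T k * star V) i j = 0 := by
  constructor
  · intro hT
    -- build the flag
    have hbot : chainW15 T (m + 1) = ⊥ := by
      refine le_bot_iff.mp (le_trans (chainW15_le_range T (m + 1)) ?_)
      refine iSup_le fun w => iSup_le fun hw => ?_
      rw [hT w (by omega), _root_.map_zero, LinearMap.range_zero]
    obtain ⟨b, f, hmono, hb⟩ := exists_subordinate15 (F := EuclideanSpace ℂ (Fin n))
      finrank_euclideanSpace_fin (chainW15 T) (chainW15_antitone T) rfl hbot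
    set B : Matrix (Fin n) (Fin n) ℂ :=
      (EuclideanSpace.basisFun (Fin n) ℂ).toBasis.toMatrix b.toBasis with hBdef
    have hBuni : B ∈ Matrix.unitaryGroup (Fin n) ℂ :=
      OrthonormalBasis.toMatrix_orthonormalBasis_mem_unitary _ _
    have hBval : ∀ p q, B p q = b q p := by
      intro p q
      simp [hBdef, Module.Basis.toMatrix_apply]
    refine ⟨star B, Unitary.star_mem hBuni, f, hmono, ?_⟩
    intro k i j hfij
    rw [star_star]
    have hinner : (star B * T k * B) i j
        = inner (𝕜 := ℂ) (b i) (Matrix.toEuclideanLin (T k) (b j)) := by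
      rw [Matrix.star_eq_conjTranspose]
      simp only [Matrix.mul_apply, Matrix.conjTranspose_apply, PiLp.inner_apply,
        RCLike.inner_apply, Matrix.toEuclideanLin_apply, hBval,
        Matrix.mulVec, dotProduct, WithLp.ofLp_toLp, Finset.mul_sum, Finset.sum_mul]
      rw [Finset.sum_comm]
      refine Finset.sum_congr rfl fun p _ => Finset.sum_congr rfl fun q _ => ?_
      simp only [RCLike.star_def]
      ring
    rw [hinner]
    have h2 : Matrix.toEuclideanLin (T k) (b j) ∈ chainW15 T ((f j : ℕ) + 1) :=
      chainW15_map_le T k (f j) (Submodule.mem_map_of_mem (hb j).1)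
    have h3 : Matrix.toEuclideanLin (T k) (b j) ∈ chainW15 T ((f i : ℕ) + 1) :=
      chainW15_antitone T (by exact_mod_cast Nat.succ_le_succ hfij) h2
    exact (Submodule.mem_orthogonal' _ _).mp (hb i).2 _ h3
  · rintro ⟨V, hV, f, hmono, h⟩
    intro w hw
    have h1 : V * star V = 1 := hV.2
    have hS := lift_conj15 T V h1 w
    have hzero : FreeMonoid.lift (fun k => V * T k * star V) w = 0 := by
      ext i j
      exact entries_zero15 _ f h w i j (by have := (f i).2; omega)
    rw [hzero] at hS
    have h2 : star V * V = 1 := hV.1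
    calc FreeMonoid.lift T w
        = star V * (V * FreeMonoid.lift T w * star V) * V := by
          rw [show star V * (V * FreeMonoid.lift T w * star V) * V
            = (star V * V) * FreeMonoid.lift T w * (star V * V) by noncomm_ring]
          rw [h2, one_mul, mul_one]
      _ = star V * 0 * V := by rw [hS]
      _ = 0 := by simp
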